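/- Let B be a T0 topological space. For each open V ⊆ B let X_V be the set of all completely prime filters on the lattice of open subsets of V, with maps R^W_V : X_W → X_V for opens W ⊆ V given by R^W_V(𝒜) = { U : U open, U ⊆ V, U ∩ W ∈ 𝒜 }. Suppose there exist a set X, a map f : X → B, and for each open V a bijection ψ_V : X_V → f⁻¹(V) such that for all opens W ⊆ V and every 𝒜 ∈ X_W one has ψ_V(R^W_V(𝒜)) = ψ_W(𝒜) as elements of X. Then B is sober (T0 and quasi-sober), and moreover f is injective. -/

import Mathlib

open TopologicalSpace

/-- A completely prime filter on the lattice of open subsets of an open set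
`V ⊆ B`: a collection `𝒜` of open subsets of `V` containing `V`, upward closed
(within the opens of `V`), closed under binary intersections, and inaccessible
by arbitrary unions of opens of `V`. -/
def IsCPFilterOn {B : Type} [TopologicalSpace B] (V : Opens B)
    (𝒜 : Set (Opens B)) : Prop :=
  (∀ U ∈ 𝒜, U ≤ V) ∧
  V ∈ 𝒜 ∧
  (∀ W ∈ 𝒜, ∀ U : Opens B, W ≤ U → U ≤ V → U ∈ 𝒜) ∧
  (∀ U ∈ 𝒜, ∀ W ∈ 𝒜, U ⊓ W ∈ 𝒜) ∧
  (∀ 𝒲 : Set (Opens B), (∀ W ∈ 𝒲, W ≤ V) → sSup 𝒲 ∈ 𝒜 → ∃ W ∈ 𝒲, W ∈ 𝒜)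

/-- The inclusion map `R^W_V` of the copresheaf of completely prime filters:
`R^W_V(𝒜) = { U : U open, U ⊆ V, U ∩ W ∈ 𝒜 }`. -/
def filtMap {B : Type} [TopologicalSpace B] (W V : Opens B)
    (𝒜 : Set (Opens B)) : Set (Opens B) :=
  {U : Opens B | U ≤ V ∧ U ⊓ W ∈ 𝒜}

section Aux
variable {B : Type} [TopologicalSpace B]

lemma filtMap_isCP (W V : Opens B) (h : W ≤ V) (𝒜 : Set (Opens B))
    (hA : IsCPFilterOn W 𝒜) : IsCPFilterOn V (filtMap W V 𝒜) := by
  obtain ⟨hle, htop, hup, hinf, hprime⟩ := hA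
  refine ⟨fun U hU => hU.1, ⟨le_rfl, by rwa [inf_eq_right.2 h]⟩, ?_, ?_, ?_⟩
  · intro U hU U' hUU' hU'V
    exact ⟨hU'V, hup _ hU.2 _ (inf_le_inf_right W hUU') inf_le_right⟩
  · intro U hU U' hU'
    refine ⟨inf_le_of_left_le hU.1, hup _ (hinf _ hU.2 _ hU'.2) _ ?_ inf_le_right⟩
    exact le_inf (inf_le_inf (inf_le_left) inf_le_left) (inf_le_of_left_le inf_le_right)
  · intro 𝒲 h𝒲 hs
    have : sSup ((· ⊓ W) '' 𝒲) ∈ 𝒜 := by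
      rw [sSup_image, ← sSup_inf_eq]; exact hs.2
    obtain ⟨U', hU', hU'A⟩ := hprime _ (by rintro _ ⟨U, hU, rfl⟩; exact inf_le_right) this
    obtain ⟨U, hU, rfl⟩ := hU'
    exact ⟨U, hU, h𝒲 U hU, hU'A⟩

lemma restrict_isCP (V : Opens B) (𝒜 : Set (Opens B)) (hA : IsCPFilterOn ⊤ 𝒜)
    (hV : V ∈ 𝒜) : IsCPFilterOn V {U | U ≤ V ∧ U ∈ 𝒜} := by
  obtain ⟨hle, htop, hup, hinf, hprime⟩ := hA
  refine ⟨fun U hU => hU.1, ⟨le_rfl, hV⟩, ?_, ?_, ?_⟩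
  · intro U hU U' hUU' hU'V
    exact ⟨hU'V, hup _ hU.2 _ hUU' le_top⟩
  · intro U hU U' hU'
    exact ⟨inf_le_of_left_le hU.1, hinf _ hU.2 _ hU'.2⟩
  · intro 𝒲 h𝒲 hs
    obtain ⟨U, hU, hUA⟩ := hprime 𝒲 (fun _ _ => le_top) hs.2
    exact ⟨U, hU, h𝒲 U hU, hUA⟩

lemma restrict_filtMap (V : Opens B) (𝒜 : Set (Opens B)) (hA : IsCPFilterOn ⊤ 𝒜)
    (hV : V ∈ 𝒜) : filtMap V ⊤ {U | U ≤ V ∧ U ∈ 𝒜} = 𝒜 := by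
  obtain ⟨hle, htop, hup, hinf, hprime⟩ := hA
  ext U
  constructor
  · rintro ⟨-, -, hUV⟩
    exact hup _ hUV _ inf_le_left le_top
  · intro hU
    exact ⟨le_top, inf_le_right, hinf _ hU _ hV⟩

end Aux

/-- Let `B` be T0, and let `X_V` be the set of completely prime
filters on the opens of each open `V`, with inclusion maps `R^W_V = filtMap W V`.
If there are a set `X`, a map `f : X → B` and bijections `ψ_V : X_V → f⁻¹(V)`
such that `ψ_V(R^W_V(𝒜)) = ψ_W(𝒜)` (in `X`) for all opens `W ≤ V` and all
`𝒜 ∈ X_W`, then `B` is sober (T0 and quasi-sober) and `f` is injective. -/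
theorem sober_of_filt_cosheaf_iso_tubes {B : Type} [TopologicalSpace B]
    [T0Space B] (X : Type) (f : X → B)
    (ψ : ∀ V : Opens B, {𝒜 : Set (Opens B) // IsCPFilterOn V 𝒜} →
      {x : X // f x ∈ V})
    (hbij : ∀ V : Opens B, Function.Bijective (ψ V))
    (hcompat : ∀ (W V : Opens B), W ≤ V →
      ∀ (𝒜 : Set (Opens B)) (hA : IsCPFilterOn W 𝒜)
        (hA' : IsCPFilterOn V (filtMap W V 𝒜)),
      ((ψ V ⟨filtMap W V 𝒜, hA'⟩ : {x : X // f x ∈ V}) : X) =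
        ((ψ W ⟨𝒜, hA⟩ : {x : X // f x ∈ W}) : X)) :
    QuasiSober B ∧ Function.Injective f := by
  let e := Equiv.ofBijective _ (hbij ⊤)
  have htriv : ∀ x : X, f x ∈ (⊤ : Opens B) := fun x => trivial
  -- the key characterization
  have key : ∀ (x : X) (V : Opens B),
      f x ∈ V ↔ V ∈ (e.symm ⟨x, htriv x⟩ : {𝒜 : Set (Opens B) // IsCPFilterOn ⊤ 𝒜}).1 := by
    intro x V
    constructor
    · intro hx
      let eV := Equiv.ofBijective _ (hbij V)
      set ℬ := eV.symm ⟨x, hx⟩ with hℬ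
      have hA' := filtMap_isCP V ⊤ le_top ℬ.1 ℬ.2
      have h1 := hcompat V ⊤ le_top ℬ.1 ℬ.2 hA'
      have h2 : ψ V ℬ = ⟨x, hx⟩ := eV.apply_symm_apply ⟨x, hx⟩
      have h3 : ψ ⊤ ⟨filtMap V ⊤ ℬ.1, hA'⟩ = ⟨x, htriv x⟩ := by
        apply Subtype.ext
        rw [h1, h2]
      have h4 : (⟨filtMap V ⊤ ℬ.1, hA'⟩ : {𝒜 : Set (Opens B) // IsCPFilterOn ⊤ 𝒜}) =
          e.symm ⟨x, htriv x⟩ := by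
        apply e.injective
        rw [e.apply_symm_apply]
        exact h3
      rw [← h4]
      exact ⟨le_top, by rw [inf_idem]; exact ℬ.2.2.1⟩
    · intro hV
      set 𝒜 := (e.symm ⟨x, htriv x⟩ : {𝒜 : Set (Opens B) // IsCPFilterOn ⊤ 𝒜}).1 with h𝒜
      have hA : IsCPFilterOn ⊤ 𝒜 := (e.symm ⟨x, htriv x⟩).2
      have hB := restrict_isCP V 𝒜 hA hV
      have hfm := restrict_filtMap V 𝒜 hA hV
      have hA' : IsCPFilterOn ⊤ (filtMap V ⊤ {U | U ≤ V ∧ U ∈ 𝒜}) := by rw [hfm]; exact hA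
      have h1 := hcompat V ⊤ le_top _ hB hA'
      have h2 : (⟨filtMap V ⊤ {U | U ≤ V ∧ U ∈ 𝒜}, hA'⟩ :
          {𝒜 : Set (Opens B) // IsCPFilterOn ⊤ 𝒜}) = e.symm ⟨x, htriv x⟩ :=
        Subtype.ext hfm
      have h3 : (ψ ⊤ (e.symm ⟨x, htriv x⟩) : X) = x := by
        have := e.apply_symm_apply ⟨x, htriv x⟩
        exact congrArg Subtype.val this
      have h4 : ((ψ V ⟨{U | U ≤ V ∧ U ∈ 𝒜}, hB⟩ : {x : X // f x ∈ V}) : X) = x := by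
        rw [← h1, h2, h3]
      have h5 := (ψ V ⟨{U | U ≤ V ∧ U ∈ 𝒜}, hB⟩).2
      rwa [h4] at h5
  refine ⟨⟨?_⟩, ?_⟩
  · intro S hirr hcl
    set 𝒜S : Set (Opens B) := {U : Opens B | ((U : Set B) ∩ S).Nonempty} with h𝒜S
    have hAS : IsCPFilterOn ⊤ 𝒜S := by
      refine ⟨fun _ _ => le_top, by rw [h𝒜S]; simpa using hirr.1, ?_, ?_, ?_⟩
      · intro W hW U hWU _
        exact hW.mono (Set.inter_subset_inter_left S hWU)
      · intro U hU W hW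
        have := hirr.2 (U : Set B) (W : Set B) U.2 W.2
          (by rwa [Set.inter_comm]) (by rwa [Set.inter_comm])
        rw [Set.inter_comm] at this
        exact this
      · intro 𝒲 h𝒲 hs
        obtain ⟨b, hb1, hb2⟩ := hs
        rw [Opens.coe_sSup] at hb1
        simp only [Set.mem_iUnion] at hb1
        obtain ⟨U, hU, hbU⟩ := hb1
        exact ⟨U, hU, b, hbU, hb2⟩
    set x : X := (ψ ⊤ ⟨𝒜S, hAS⟩ : {x : X // f x ∈ (⊤ : Opens B)}).1 with hx
    have hsymm : e.symm ⟨x, htriv x⟩ = ⟨𝒜S, hAS⟩ := by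
      apply e.injective
      rw [e.apply_symm_apply]
      exact Subtype.ext hx
    have key' : ∀ V : Opens B, f x ∈ V ↔ ((V : Set B) ∩ S).Nonempty := by
      intro V
      rw [key x V, hsymm]
      exact Iff.rfl
    refine ⟨f x, ?_⟩
    have hbS : f x ∈ S := by
      by_contra h
      have : f x ∈ (⟨Sᶜ, hcl.isOpen_compl⟩ : Opens B) := h
      obtain ⟨b, hb1, hb2⟩ := (key' _).1 this
      exact hb1 hb2
    apply subset_antisymm
    · exact hcl.closure_subset_iff.2 (Set.singleton_subset_iff.2 hbS)
    · intro s hs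
      rw [mem_closure_iff]
      intro o ho hso
      have : ((o : Set B) ∩ S).Nonempty := ⟨s, hso, hs⟩
      exact ⟨f x, (key' ⟨o, ho⟩).2 this, rfl⟩
  · intro x y hxy
    have h1 : (e.symm ⟨x, htriv x⟩ : {𝒜 : Set (Opens B) // IsCPFilterOn ⊤ 𝒜}) =
        e.symm ⟨y, htriv y⟩ := by
      apply Subtype.ext
      ext V
      rw [← key x V, ← key y V, hxy]
    have h2 := congrArg e h1
    rw [e.apply_symm_apply, e.apply_symm_apply] at h2
    exact congrArg Subtype.val h2
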